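/- arXiv:0811.2825 — 7 statements merged into one kernel-verified Lean document; each statement's English description precedes it below -/
import Mathlib

section
/- Fix an integer N ≥ 1 and g ∈ ℝ, and let F̃ : ℝᴺ → ℝ be any differentiable function. On the domain { (T₁,T₃,…,T_{2N+1}) ∈ ℝ^{N+1} : T_{2N+1} < 0 }, define for 1 ≤ k ≤ N the variables χ_k = ((2N−2k+1)!!/(2N+1)!!) · (−2·T_{2N−2k+1}) · (−2·T_{2N+1})^{−(2N−2k+1)/(2N+1)}, and set F(T₁,…,T_{2N+1}) = −(g²/(8(2N+1)))·log(−T_{2N+1}) + F̃(χ₁,…,χ_N). Then F satisfies the reduced L₀ Virasoro constraint: Σ_{k=0}^{N} (2k+1)·T_{2k+1}·∂F/∂T_{2k+1} + g²/8 = 0. -/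
open Real Finset

/-- The general solution of the reduced `L₀` Virasoro constraint of the Kontsevich
model with times `T₁, T₃, …, T_{2N+1}` (the `i`-th coordinate of `T : Fin (N+1) → ℝ`
is the time `T_{2i+1}`).  Here `F̃` is an arbitrary function of the `N` scaling-invariant
variables
`χ_k = ((2N−2k+1)!!/(2N+1)!!) · (−2·T_{2N−2k+1}) · (−2·T_{2N+1})^{−(2N−2k+1)/(2N+1)}`
for `1 ≤ k ≤ N` (the coordinate `j : Fin N` corresponds to `k = j+1`, so that
`2N−2k+1 = 2(N−1−j)+1`). -/
noncomputable def kontsevichL0Solution (N : ℕ) (g : ℝ) (Ftilde : (Fin N → ℝ) → ℝ)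
    (T : Fin (N + 1) → ℝ) : ℝ :=
  -(g ^ 2 / (8 * (2 * (N : ℝ) + 1))) * Real.log (-(T (Fin.last N))) +
    Ftilde (fun j : Fin N =>
      ((Nat.doubleFactorial (2 * (N - 1 - (j : ℕ)) + 1) : ℝ) /
          (Nat.doubleFactorial (2 * N + 1) : ℝ)) *
        (-2 * T ⟨N - 1 - (j : ℕ), by omega⟩) *
        (-2 * T (Fin.last N)) ^
          (-(((2 * (N - 1 - (j : ℕ)) + 1 : ℕ) : ℝ)) / (2 * (N : ℝ) + 1)))

/-- Every function of the above form (with `F̃` an arbitrary differentiable function)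
satisfies the reduced `L₀` Virasoro constraint
`Σ_{k=0}^{N} (2k+1)·T_{2k+1}·∂F/∂T_{2k+1} + g²/8 = 0` on the domain `T_{2N+1} < 0`. -/
theorem kontsevichL0Solution_satisfies_L0 (N : ℕ) (hN : 1 ≤ N) (g : ℝ)
    (Ftilde : (Fin N → ℝ) → ℝ) (hFtilde : Differentiable ℝ Ftilde)
    (T : Fin (N + 1) → ℝ) (hT : T (Fin.last N) < 0) :
    ∑ k : Fin (N + 1), (2 * (k : ℝ) + 1) * T k *
        fderiv ℝ (kontsevichL0Solution N g Ftilde) T (Pi.single k 1) +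
      g ^ 2 / 8 = 0 := by
  classical
  set F := kontsevichL0Solution N g Ftilde with hF
  set c : ℝ := 2 * (N : ℝ) + 1 with hc_def
  have hcpos : (0:ℝ) < c := by positivity
  have hc : c ≠ 0 := ne_of_gt hcpos
  have hTne : T (Fin.last N) ≠ 0 := ne_of_lt hT
  have hTne' : -T (Fin.last N) ≠ 0 := by simpa using neg_ne_zero.2 hTne
  have hbase : (0:ℝ) < -2 * T (Fin.last N) := by nlinarith
  -- differentiability of F at T
  have hdiff : DifferentiableAt ℝ F T := by
    rw [hF]
    unfold kontsevichL0Solution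
    apply DifferentiableAt.add
    · apply DifferentiableAt.const_mul
      apply DifferentiableAt.log
      · exact (differentiableAt_apply _ _).neg
      · simpa using hTne
    · apply DifferentiableAt.comp
      · exact hFtilde.differentiableAt
      · apply differentiableAt_pi.2
        intro j
        apply DifferentiableAt.mul
        · exact ((differentiableAt_apply _ _).const_mul _).const_mul _
        · exact ((differentiableAt_apply _ _).const_mul _).rpow_const
            (Or.inl (ne_of_gt hbase))
  set L := fderiv ℝ F T with hL_def
  have hL : HasFDerivAt F L T := hdiff.hasFDerivAt
  -- the scaling curve
  set γ : ℝ → Fin (N + 1) → ℝ :=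
    fun t k => Real.exp ((2 * ((k:ℕ):ℝ) + 1) * t) * T k with hγ_def
  set v : Fin (N + 1) → ℝ := fun k => (2 * ((k:ℕ):ℝ) + 1) * T k with hv_def
  have hγ0 : γ 0 = T := by funext k; simp [hγ_def]
  have hγ : HasDerivAt γ v 0 := by
    apply hasDerivAt_pi.2
    intro k
    have h1 : HasDerivAt (fun t : ℝ => (2 * ((k:ℕ):ℝ) + 1) * t)
        (2 * ((k:ℕ):ℝ) + 1) 0 := by
      simpa using (hasDerivAt_id (0:ℝ)).const_mul (2 * ((k:ℕ):ℝ) + 1)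
    simpa [hv_def] using (h1.exp.mul_const (T k))
  -- invariance computation
  have key : ∀ t : ℝ, F (γ t) = F T - g ^ 2 / 8 * t := by
    intro t
    rw [hF]
    unfold kontsevichL0Solution
    have hlast : γ t (Fin.last N) = Real.exp (c * t) * T (Fin.last N) := by
      simp [hγ_def, hc_def, Fin.val_last]
    have hlog : Real.log (-(γ t (Fin.last N))) =
        c * t + Real.log (-(T (Fin.last N))) := by
      rw [hlast, show -(Real.exp (c*t) * T (Fin.last N))
          = Real.exp (c*t) * (-(T (Fin.last N))) by ring,
        Real.log_mul (Real.exp_ne_zero _) hTne', Real.log_exp]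
    have hchi : ∀ j : Fin N,
        ((Nat.doubleFactorial (2 * (N - 1 - (j : ℕ)) + 1) : ℝ) /
          (Nat.doubleFactorial (2 * N + 1) : ℝ)) *
        (-2 * γ t ⟨N - 1 - (j : ℕ), by omega⟩) *
        (-2 * γ t (Fin.last N)) ^
          (-(((2 * (N - 1 - (j : ℕ)) + 1 : ℕ) : ℝ)) / (2 * (N : ℝ) + 1)) =
        ((Nat.doubleFactorial (2 * (N - 1 - (j : ℕ)) + 1) : ℝ) /
          (Nat.doubleFactorial (2 * N + 1) : ℝ)) *
        (-2 * T ⟨N - 1 - (j : ℕ), by omega⟩) *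
        (-2 * T (Fin.last N)) ^
          (-(((2 * (N - 1 - (j : ℕ)) + 1 : ℕ) : ℝ)) / (2 * (N : ℝ) + 1)) := by
      intro j
      set m : ℝ := ((2 * (N - 1 - (j : ℕ)) + 1 : ℕ) : ℝ) with hm_def
      have hmid : γ t ⟨N - 1 - (j : ℕ), by omega⟩
          = Real.exp (m * t) * T ⟨N - 1 - (j : ℕ), by omega⟩ := by
        simp only [hγ_def]
        congr 2
        rw [hm_def]; push_cast; ring
      have hsplit : (-2 * γ t (Fin.last N)) ^ (-m / c)
          = Real.exp (-(m * t)) * (-2 * T (Fin.last N)) ^ (-m / c) := by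
        rw [hlast, show -2 * (Real.exp (c*t) * T (Fin.last N))
            = Real.exp (c*t) * (-2 * T (Fin.last N)) by ring,
          Real.mul_rpow (Real.exp_nonneg _) hbase.le,
          ← Real.exp_mul]
        congr 2
        field_simp
      rw [hmid, hsplit]
      have hee : Real.exp (m * t) * Real.exp (-(m * t)) = 1 := by
        rw [← Real.exp_add]; simp
      calc ((Nat.doubleFactorial (2 * (N - 1 - (j : ℕ)) + 1) : ℝ) /
          (Nat.doubleFactorial (2 * N + 1) : ℝ)) *
            (-2 * (Real.exp (m*t) * T ⟨N - 1 - (j : ℕ), by omega⟩)) *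
            (Real.exp (-(m * t)) * (-2 * T (Fin.last N)) ^ (-m / c))
          = ((Nat.doubleFactorial (2 * (N - 1 - (j : ℕ)) + 1) : ℝ) /
          (Nat.doubleFactorial (2 * N + 1) : ℝ)) *
            (-2 * T ⟨N - 1 - (j : ℕ), by omega⟩) *
            (-2 * T (Fin.last N)) ^ (-m / c) *
            (Real.exp (m*t) * Real.exp (-(m * t))) := by ring
        _ = _ := by rw [hee, mul_one]
    have harg : (fun j : Fin N =>
        ((Nat.doubleFactorial (2 * (N - 1 - (j : ℕ)) + 1) : ℝ) /
          (Nat.doubleFactorial (2 * N + 1) : ℝ)) *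
        (-2 * γ t ⟨N - 1 - (j : ℕ), by omega⟩) *
        (-2 * γ t (Fin.last N)) ^
          (-(((2 * (N - 1 - (j : ℕ)) + 1 : ℕ) : ℝ)) / (2 * (N : ℝ) + 1))) =
        (fun j : Fin N =>
        ((Nat.doubleFactorial (2 * (N - 1 - (j : ℕ)) + 1) : ℝ) /
          (Nat.doubleFactorial (2 * N + 1) : ℝ)) *
        (-2 * T ⟨N - 1 - (j : ℕ), by omega⟩) *
        (-2 * T (Fin.last N)) ^
          (-(((2 * (N - 1 - (j : ℕ)) + 1 : ℕ) : ℝ)) / (2 * (N : ℝ) + 1))) := by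
      funext j; exact hchi j
    rw [hlog, harg, hc_def.symm]
    field_simp
    ring_nf
    congr 4
    funext j
    ring
  -- derivative of t ↦ F (γ t)
  -- derivative of t ↦ F (γ t)
  have hLγ0 : HasFDerivAt F L (γ 0) := hγ0 ▸ hL
  have h1 : HasDerivAt (F ∘ γ) (L v) 0 := hLγ0.comp_hasDerivAt 0 hγ
  have h1' : HasDerivAt (fun t : ℝ => F T - g ^ 2 / 8 * t) (L v) 0 := by
    have hfg : F ∘ γ = fun t : ℝ => F T - g ^ 2 / 8 * t := by
      funext t; exact key t
    rwa [hfg] at h1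
  have h2 : HasDerivAt (fun t : ℝ => F T - g ^ 2 / 8 * t) (-(g ^ 2 / 8)) 0 := by
    simpa using (((hasDerivAt_id (0:ℝ)).const_mul (g ^ 2 / 8)).const_sub (F T))
  have hLv : L v = -(g ^ 2 / 8) := h1'.unique h2
  -- rewrite the sum as L v
  have hsum : ∑ k : Fin (N + 1), (2 * (k : ℝ) + 1) * T k * L (Pi.single k 1) = L v := by
    have hs : ∀ k : Fin (N + 1), (Pi.single k (v k) : Fin (N+1) → ℝ)
        = v k • (Pi.single k (1:ℝ) : Fin (N+1) → ℝ) := by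
      intro k; funext i
      simp [Pi.single_apply, mul_ite]
    have : ∀ k : Fin (N + 1), (2 * (k : ℝ) + 1) * T k * L (Pi.single k 1)
        = L (Pi.single k (v k)) := by
      intro k
      rw [hs k, map_smul, smul_eq_mul, hv_def]
    rw [Finset.sum_congr rfl (fun k _ => this k), ← map_sum,
      Finset.univ_sum_single]
  rw [hsum, hLv]
  ring
end

section
/- Fix an integer N ≥ 1. For χ = (χ₁,…,χ_N) ∈ ℝᴺ put χ(z) = Σ_{k=1}^{N} χ_k z^k, and for 1 ≤ i ≤ N define η_i(χ) to be the coefficient of z^i in the formal power series −log(1+χ(z)) = Σ_{p≥1} ((−1)^p/p)·χ(z)^p (each η_i is a polynomial in χ₁,…,χ_N). Then, with the convention χ₀ = 1, for every 1 ≤ i ≤ N one has the identity Σ_{k=0}^{N−1} χ_k · ∂η_i/∂χ_{k+1} = −δ_{i,1}, i.e. the vector field ∂/∂χ₁ + Σ_{k=1}^{N−1} χ_k ∂/∂χ_{k+1} maps to −∂/∂η₁ under the change of variables χ ↦ η. -/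
open Finset Polynomial

/-- The generating polynomial `χ(z) = Σ_{k=1}^{N} χ_k z^k` (the coordinate
`j : Fin N` of `χ` is the variable `χ_{j+1}`). -/
noncomputable def chiPoly (N : ℕ) (χ : Fin N → ℝ) : Polynomial ℝ :=
  ∑ k : Fin N, Polynomial.C (χ k) * Polynomial.X ^ ((k : ℕ) + 1)

/-- `η_i(χ)` is the coefficient of `z^i` in the formal power series
`−log(1+χ(z)) = Σ_{p≥1} ((−1)^p/p)·χ(z)^p`.  Since `χ(z)` has no constant term,
only the powers `1 ≤ p ≤ i` contribute to the coefficient of `z^i`, so the sum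
may be truncated at `p = i`. -/
noncomputable def etaVar (N : ℕ) (i : ℕ) (χ : Fin N → ℝ) : ℝ :=
  ∑ p ∈ Finset.Icc 1 i, ((-1 : ℝ) ^ p / p) * ((chiPoly N χ) ^ p).coeff i

lemma chiPoly_coeff (N : ℕ) (c : Fin N → ℝ) (m : ℕ) :
    (chiPoly N c).coeff m =
      if h : 1 ≤ m ∧ m ≤ N then c ⟨m - 1, by omega⟩ else 0 := by
  simp only [chiPoly, finset_sum_coeff, coeff_C_mul, coeff_X_pow, mul_ite, mul_one, mul_zero]
  split_ifs with h
  · rw [Finset.sum_eq_single (⟨m - 1, by omega⟩ : Fin N)]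
    · simp only []
      rw [if_pos]; omega
    · intro k _ hk
      rw [if_neg]
      intro he
      apply hk
      apply Fin.ext
      simp only []
      omega
    · simp
  · apply Finset.sum_eq_zero
    intro k _
    rw [if_neg]
    have := k.isLt
    omega

lemma coeff_prod_chi (N : ℕ) {p : ℕ} (c : Fin p → Fin N → ℝ) (i : ℕ) :
    (∏ j, chiPoly N (c j)).coeff i =
      ∑ x ∈ Fintype.piFinset (fun _ : Fin p => (Finset.univ : Finset (Fin N))),
        if (∑ j, ((x j : ℕ) + 1)) = i then ∏ j, c j (x j) else 0 := by
  have h1 : (∏ j, chiPoly N (c j)) =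
      ∑ x ∈ Fintype.piFinset (fun _ : Fin p => (Finset.univ : Finset (Fin N))),
        ∏ j, (Polynomial.C (c j (x j)) * Polynomial.X ^ ((x j : ℕ) + 1)) := by
    simp only [chiPoly]
    exact Finset.prod_univ_sum _ _
  rw [h1, finset_sum_coeff]
  apply Finset.sum_congr rfl
  intro x _
  rw [Finset.prod_mul_distrib, ← map_prod, Finset.prod_pow_eq_pow_sum, coeff_C_mul, coeff_X_pow]
  simp [eq_comm, mul_comm]

lemma hasFDerivAt_coeff_pow (N : ℕ) (p i : ℕ) (χ : Fin N → ℝ) :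
    HasFDerivAt (fun χ : Fin N → ℝ => ((chiPoly N χ) ^ p).coeff i)
      (∑ x ∈ Fintype.piFinset (fun _ : Fin p => (Finset.univ : Finset (Fin N))),
        (if (∑ j, ((x j : ℕ) + 1)) = i then (1:ℝ) else 0) •
          (∑ m : Fin p, (∏ j ∈ Finset.univ.erase m, χ (x j)) •
            ContinuousLinearMap.proj (R := ℝ) (φ := fun _ : Fin N => ℝ) (x m))) χ := by
  have hfun : (fun χ : Fin N → ℝ => ((chiPoly N χ) ^ p).coeff i) =
      (fun χ : Fin N → ℝ => ∑ x ∈ Fintype.piFinset (fun _ : Fin p => (Finset.univ : Finset (Fin N))),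
        (if (∑ j, ((x j : ℕ) + 1)) = i then (1:ℝ) else 0) * ∏ j, χ (x j)) := by
    funext y
    have : (chiPoly N y) ^ p = ∏ _j : Fin p, chiPoly N y := by
      simp [Finset.prod_const]
    rw [this, coeff_prod_chi]
    simp [boole_mul]
  rw [hfun]
  apply HasFDerivAt.fun_sum
  intro x _
  exact (HasFDerivAt.finset_prod (fun j _ =>
    (ContinuousLinearMap.proj (R := ℝ) (φ := fun _ : Fin N => ℝ) (x j)).hasFDerivAt)).const_mul _

lemma deriv_apply_eq (N : ℕ) {p : ℕ} (i : ℕ) (χ w : Fin N → ℝ) :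
    (∑ x ∈ Fintype.piFinset (fun _ : Fin p => (Finset.univ : Finset (Fin N))),
        (if (∑ j, ((x j : ℕ) + 1)) = i then (1:ℝ) else 0) •
          (∑ m : Fin p, (∏ j ∈ Finset.univ.erase m, χ (x j)) •
            ContinuousLinearMap.proj (R := ℝ) (φ := fun _ : Fin N => ℝ) (x m))) w
      = p * ((chiPoly N w) * (chiPoly N χ) ^ (p - 1)).coeff i := by
  have key : ∀ m : Fin p, ((chiPoly N w) * (chiPoly N χ) ^ (p - 1)).coeff i
      = ∑ x ∈ Fintype.piFinset (fun _ : Fin p => (Finset.univ : Finset (Fin N))),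
          if (∑ j, ((x j : ℕ) + 1)) = i then w (x m) * ∏ j ∈ Finset.univ.erase m, χ (x j) else 0 := by
    intro m
    have h1 : (chiPoly N w) * (chiPoly N χ) ^ (p - 1)
        = ∏ j : Fin p, chiPoly N (Function.update (fun _ => χ) m w j) := by
      have : ∀ j : Fin p, chiPoly N (Function.update (fun _ => χ) m w j)
          = Function.update (fun _ : Fin p => chiPoly N χ) m (chiPoly N w) j := by
        intro j
        exact Function.apply_update (fun _ y => chiPoly N y) (fun _ => χ) m w j
      rw [Finset.prod_congr rfl (fun j _ => this j), Finset.prod_update_of_mem (Finset.mem_univ m)]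
      congr 1
      rw [Finset.sdiff_singleton_eq_erase, Finset.prod_const, Finset.card_erase_of_mem (Finset.mem_univ m)]
      simp
    rw [h1, coeff_prod_chi]
    apply Finset.sum_congr rfl
    intro x _
    congr 1
    rw [← Finset.mul_prod_erase Finset.univ _ (Finset.mem_univ m)]
    congr 1
    · simp
    · apply Finset.prod_congr rfl
      intro j hj
      rw [Function.update_of_ne (Finset.ne_of_mem_erase hj)]
  simp only [ContinuousLinearMap.coe_sum', Finset.sum_apply, ContinuousLinearMap.coe_smul',
    Pi.smul_apply, ContinuousLinearMap.proj_apply, smul_eq_mul]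
  have hp : (p : ℝ) * ((chiPoly N w) * (chiPoly N χ) ^ (p - 1)).coeff i
      = ∑ _m : Fin p, ((chiPoly N w) * (chiPoly N χ) ^ (p - 1)).coeff i := by
    simp [Finset.sum_const, mul_comm]
  rw [hp, Finset.sum_congr rfl (fun m _ => key m), Finset.sum_comm]
  apply Finset.sum_congr rfl
  intro x _
  rw [Finset.mul_sum]
  apply Finset.sum_congr rfl
  intro m _
  simp [boole_mul, mul_comm]

lemma chiPoly_w (N : ℕ) (hN : 1 ≤ N) (χ : Fin N → ℝ) :
    chiPoly N (fun k : Fin N => if (k : ℕ) = 0 then (1 : ℝ)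
        else χ ⟨(k : ℕ) - 1, lt_of_le_of_lt (Nat.sub_le _ _) k.isLt⟩)
      = X * (1 + chiPoly N χ) - C (χ ⟨N - 1, by omega⟩) * X ^ (N + 1) := by
  ext m
  rw [chiPoly_coeff]
  simp only [coeff_sub, coeff_C_mul, coeff_X_pow]
  cases m with
  | zero => simp [coeff_zero, mul_coeff_zero]
  | succ n =>
    rw [coeff_X_mul, coeff_add, coeff_one, chiPoly_coeff]
    split_ifs <;> first | rfl | omega | (simp_all; omega) | skip
    all_goals simp only [mul_zero, mul_one, add_zero, zero_add, sub_zero]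
    all_goals first
      | rfl
      | (rw [eq_comm, sub_eq_zero]; congr 1; simp only [Fin.mk.injEq]; omega)


lemma X_dvd_chiPoly (N : ℕ) (χ : Fin N → ℝ) : (X : Polynomial ℝ) ∣ chiPoly N χ := by
  apply Finset.dvd_sum
  intro k _
  exact Dvd.dvd.mul_left (dvd_pow_self X (Nat.succ_ne_zero _)) _

/-- With the convention `χ₀ = 1`, for every `1 ≤ i ≤ N` one has
`Σ_{k=0}^{N−1} χ_k · ∂η_i/∂χ_{k+1} = −δ_{i,1}`, i.e. the vector field
`∂/∂χ₁ + Σ_{k=1}^{N−1} χ_k ∂/∂χ_{k+1}` maps to `−∂/∂η₁` under the change of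
variables `χ ↦ η`.  (The coordinate `k : Fin N` represents the variable
`χ_{k+1}`, so `∂/∂χ_{k+1}` is the derivative along `Pi.single k 1` and the
coefficient `χ_k` is `1` for `k = 0` and the `(k−1)`-th coordinate otherwise.) -/
theorem chi_vector_field_maps_to_eta₁ (N : ℕ) (hN : 1 ≤ N)
    (i : ℕ) (hi₁ : 1 ≤ i) (hiN : i ≤ N) (χ : Fin N → ℝ) :
    ∑ k : Fin N,
        (if (k : ℕ) = 0 then (1 : ℝ)
          else χ ⟨(k : ℕ) - 1, lt_of_le_of_lt (Nat.sub_le _ _) k.isLt⟩) *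
          fderiv ℝ (etaVar N i) χ (Pi.single k 1)
      = -(if i = 1 then (1 : ℝ) else 0) := by
  classical
  set w : Fin N → ℝ := fun k : Fin N => if (k : ℕ) = 0 then (1 : ℝ)
      else χ ⟨(k : ℕ) - 1, lt_of_le_of_lt (Nat.sub_le _ _) k.isLt⟩ with hw
  set D : (Fin N → ℝ) →L[ℝ] ℝ := ∑ p ∈ Finset.Icc 1 i, ((-1 : ℝ) ^ p / p) •
      (∑ x ∈ Fintype.piFinset (fun _ : Fin p => (Finset.univ : Finset (Fin N))),
        (if (∑ j, ((x j : ℕ) + 1)) = i then (1:ℝ) else 0) •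
          (∑ m : Fin p, (∏ j ∈ Finset.univ.erase m, χ (x j)) •
            ContinuousLinearMap.proj (R := ℝ) (φ := fun _ : Fin N => ℝ) (x m))) with hD
  have hEta : HasFDerivAt (etaVar N i) D χ := by
    apply HasFDerivAt.fun_sum
    intro p _
    exact (hasFDerivAt_coeff_pow N p i χ).const_mul _
  rw [show (∑ k : Fin N, w k * fderiv ℝ (etaVar N i) χ (Pi.single k 1)) = D w by
    rw [hEta.fderiv]
    have : w = ∑ k : Fin N, Pi.single k (w k) := (Finset.univ_sum_single w).symm
    conv_rhs => rw [this]
    rw [map_sum]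
    apply Finset.sum_congr rfl
    intro k _
    rw [show Pi.single k (w k) = w k • (Pi.single k 1 : Fin N → ℝ) by
      rw [← Pi.single_smul, smul_eq_mul, mul_one]]
    rw [map_smul, smul_eq_mul]]
  -- evaluate D w
  obtain ⟨n, rfl⟩ : ∃ n, i = n + 1 := ⟨i - 1, by omega⟩
  have hDw : D w = ∑ p ∈ Finset.Icc 1 (n+1),
      ((-1 : ℝ) ^ p / p) * (p * ((chiPoly N w) * (chiPoly N χ) ^ (p - 1)).coeff (n+1)) := by
    rw [hD, ContinuousLinearMap.sum_apply]
    apply Finset.sum_congr rfl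
    intro p _
    rw [ContinuousLinearMap.smul_apply, deriv_apply_eq, smul_eq_mul]
  rw [hDw]
  -- coefficient computation
  have hWT : ∀ p ∈ Finset.Icc 1 (n+1),
      ((chiPoly N w) * (chiPoly N χ) ^ (p - 1)).coeff (n+1)
        = ((chiPoly N χ) ^ (p-1)).coeff n + ((chiPoly N χ) ^ p).coeff n := by
    intro p hp
    simp only [Finset.mem_Icc] at hp
    rw [hw, chiPoly_w N hN χ, sub_mul, coeff_sub]
    have h2 : (C (χ ⟨N - 1, by omega⟩) * X ^ (N + 1) * (chiPoly N χ) ^ (p-1)).coeff (n+1) = 0 := by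
      rw [show C (χ ⟨N - 1, by omega⟩) * X ^ (N + 1) * (chiPoly N χ) ^ (p-1)
          = C (χ ⟨N - 1, by omega⟩) * ((chiPoly N χ) ^ (p-1) * X ^ (N + 1)) by ring]
      rw [coeff_C_mul, coeff_mul_X_pow']
      rw [if_neg (by omega)]
      simp
    rw [h2, sub_zero]
    rw [show X * (1 + chiPoly N χ) * (chiPoly N χ) ^ (p-1)
        = X * ((chiPoly N χ) ^ (p-1) + (chiPoly N χ) ^ (p-1+1)) by ring]
    rw [coeff_X_mul, coeff_add, show p - 1 + 1 = p by omega]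
  rw [Finset.sum_congr rfl (fun p hp => by rw [hWT p hp])]
  have hsimp : ∀ p ∈ Finset.Icc 1 (n+1),
      ((-1 : ℝ) ^ p / p) * (p * (((chiPoly N χ) ^ (p-1)).coeff n + ((chiPoly N χ) ^ p).coeff n))
        = ((-1:ℝ)^p * ((chiPoly N χ) ^ p).coeff n) - ((-1:ℝ)^(p-1) * ((chiPoly N χ) ^ (p-1)).coeff n) := by
    intro p hp
    simp only [Finset.mem_Icc] at hp
    have hp0 : (p : ℝ) ≠ 0 := Nat.cast_ne_zero.mpr (by omega)
    obtain ⟨q, rfl⟩ : ∃ q, p = q + 1 := ⟨p - 1, by omega⟩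
    simp only [Nat.add_sub_cancel]
    field_simp
    ring
  rw [Finset.sum_congr rfl hsimp]
  have hA : ((chiPoly N χ) ^ (n+1)).coeff n = 0 := by
    obtain ⟨Q, hQ⟩ := pow_dvd_pow_of_dvd (X_dvd_chiPoly N χ) (n+1)
    rw [hQ, mul_comm, coeff_mul_X_pow', if_neg (by omega)]
  have tele : ∑ p ∈ Finset.Icc 1 (n+1),
      ((-1:ℝ)^p * ((chiPoly N χ) ^ p).coeff n - (-1:ℝ)^(p-1) * ((chiPoly N χ) ^ (p-1)).coeff n)
      = (-1:ℝ)^(n+1) * ((chiPoly N χ) ^ (n+1)).coeff n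
        - (-1:ℝ)^0 * ((chiPoly N χ) ^ 0).coeff n := by
    rw [← Finset.Ico_add_one_right_eq_Icc, Finset.sum_Ico_eq_sum_range]
    rw [show n + 1 + 1 - 1 = n + 1 by omega]
    rw [Finset.sum_congr rfl (fun j _ => by rw [show 1 + j = j + 1 by omega, Nat.add_sub_cancel])]
    exact Finset.sum_range_sub (fun p => (-1:ℝ)^p * ((chiPoly N χ) ^ p).coeff n) (n+1)
  rw [tele, hA]
  simp [Polynomial.coeff_one]
end

section
/- Let s ∈ ℝ and z ∈ ℝ with z > s and z > 0. Then the limit as w → z of the expression (z + w − 2s)/((z − w)²·√(z−s)·√(w−s)) − (z + w)/(√(z·w)·(z − w)²) exists and equals s·(2z − s)/(4·z²·(z − s)²). -/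
open Real Filter Topology

/-- The two double poles at `z₁ = z₂` of the genus-zero two-point resolvent of
the Gaussian Kontsevich model cancel on the diagonal: as `w → z` (with `z > s`,
`z > 0`), the expression
`(z + w − 2s)/((z − w)²·√(z−s)·√(w−s)) − (z + w)/(√(z·w)·(z − w)²)`
has a finite limit, equal to `s·(2z − s)/(4·z²·(z − s)²)`. -/
theorem gaussian_two_point_resolvent_diagonal_limit (s z : ℝ) (hzs : s < z) (hz : 0 < z) :
    Tendsto
      (fun w : ℝ =>
        (z + w - 2 * s) / ((z - w) ^ 2 * Real.sqrt (z - s) * Real.sqrt (w - s)) -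
          (z + w) / (Real.sqrt (z * w) * (z - w) ^ 2))
      (𝓝[≠] z)
      (𝓝 (s * (2 * z - s) / (4 * z ^ 2 * (z - s) ^ 2))) := by
  set g : ℝ → ℝ := fun w =>
    s * (z + w - s) /
      (Real.sqrt (z - s) * Real.sqrt (w - s) * Real.sqrt (z * w) *
        ((z + w - 2 * s) * Real.sqrt (z * w) +
          (z + w) * (Real.sqrt (z - s) * Real.sqrt (w - s)))) with hg
  have ha : Real.sqrt (z - s) ^ 2 = z - s := Real.sq_sqrt (by linarith)
  have hapos : 0 < Real.sqrt (z - s) := Real.sqrt_pos.2 (by linarith)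
  -- g is continuous at z with the right value
  have hzz : Real.sqrt (z * z) = z := by
    rw [Real.sqrt_mul_self hz.le]
  have hgz : g z = s * (2 * z - s) / (4 * z ^ 2 * (z - s) ^ 2) := by
    simp only [hg, hzz]
    have : Real.sqrt (z - s) * Real.sqrt (z - s) * z *
        ((z + z - 2 * s) * z + (z + z) * (Real.sqrt (z - s) * Real.sqrt (z - s)))
        = 4 * z ^ 2 * (z - s) ^ 2 := by
      have h2 : Real.sqrt (z - s) * Real.sqrt (z - s) = z - s := by
        nlinarith [ha]
      rw [h2]; ring
    rw [this]
    ring_nf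
  have hgcont : ContinuousAt g z := by
    apply ContinuousAt.div
    · fun_prop
    · apply ContinuousAt.mul
      · apply ContinuousAt.mul
        · exact (continuous_const.mul (Real.continuous_sqrt.comp
            (continuous_id.sub continuous_const))).continuousAt
        · exact (Real.continuous_sqrt.comp (continuous_const.mul continuous_id)).continuousAt
      · fun_prop
    · -- denominator nonzero at z
      have h2 : Real.sqrt (z - s) * Real.sqrt (z - s) = z - s := by nlinarith [ha]
      rw [hzz, h2]
      have : (z - s) * z * ((z + z - 2 * s) * z + (z + z) * (z - s))
          = 4 * z ^ 2 * (z - s) ^ 2 := by ring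
      rw [this]
      have hd : (0:ℝ) < z - s := by linarith
      positivity
  have hgt : Tendsto g (𝓝[≠] z) (𝓝 (s * (2 * z - s) / (4 * z ^ 2 * (z - s) ^ 2))) := by
    rw [← hgz]
    exact hgcont.continuousWithinAt.tendsto
  refine hgt.congr' ?_
  -- eventual equality on the punctured neighborhood
  have hev : ∀ᶠ w in 𝓝[≠] z, s < w ∧ 0 < w ∧ w ≠ z := by
    filter_upwards [nhdsWithin_le_nhds (eventually_gt_nhds hzs),
      nhdsWithin_le_nhds (eventually_gt_nhds hz), self_mem_nhdsWithin] with w h1 h2 h3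
    exact ⟨h1, h2, h3⟩
  filter_upwards [hev] with w ⟨hsw, hw, hwz⟩
  set a := Real.sqrt (z - s)
  set b := Real.sqrt (w - s)
  set c := Real.sqrt (z * w)
  have hb : b ^ 2 = w - s := Real.sq_sqrt (by linarith)
  have hc : c ^ 2 = z * w := Real.sq_sqrt (by positivity)
  have hbpos : 0 < b := Real.sqrt_pos.2 (by linarith)
  have hcpos : 0 < c := Real.sqrt_pos.2 (by positivity)
  have hzw : z - w ≠ 0 := sub_ne_zero.2 (Ne.symm hwz)
  have hMpos : 0 < (z + w - 2 * s) * c + (z + w) * (a * b) := by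
    have h1 : 0 < z + w - 2 * s := by linarith
    have h2 : 0 < z + w := by linarith
    positivity
  have hkey : ((z + w - 2 * s) * c - (z + w) * (a * b)) *
      ((z + w - 2 * s) * c + (z + w) * (a * b)) = (z - w) ^ 2 * (s * (z + w - s)) := by
    have e1 : ((z + w - 2 * s) * c - (z + w) * (a * b)) *
        ((z + w - 2 * s) * c + (z + w) * (a * b))
        = (z + w - 2 * s) ^ 2 * c ^ 2 - (z + w) ^ 2 * a ^ 2 * b ^ 2 := by ring
    rw [e1, ha, hb, hc]; ring
  have hN : (z + w - 2 * s) * c - (z + w) * (a * b)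
      = (z - w) ^ 2 * (s * (z + w - s)) / ((z + w - 2 * s) * c + (z + w) * (a * b)) :=
    (eq_div_iff hMpos.ne').2 hkey
  have step : (z + w - 2 * s) / ((z - w) ^ 2 * a * b) - (z + w) / (c * (z - w) ^ 2)
      = ((z + w - 2 * s) * c - (z + w) * (a * b)) / ((z - w) ^ 2 * (a * b * c)) := by
    field_simp
  show g w = (z + w - 2 * s) / ((z - w) ^ 2 * a * b) - (z + w) / (c * (z - w) ^ 2)
  rw [step, hN]
  show s * (z + w - s) / (a * b * c * ((z + w - 2 * s) * c + (z + w) * (a * b))) = _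
  rw [div_div]
  have hzw2 : 0 < (z - w) ^ 2 := pow_two_pos_of_ne_zero hzw
  have h1 : a * b * c * ((z + w - 2 * s) * c + (z + w) * (a * b)) ≠ 0 :=
    (mul_pos (by positivity : (0:ℝ) < a * b * c) hMpos).ne'
  have h2 : ((z + w - 2 * s) * c + (z + w) * (a * b)) * ((z - w) ^ 2 * (a * b * c)) ≠ 0 :=
    (mul_pos hMpos (by positivity : (0:ℝ) < (z - w) ^ 2 * (a * b * c))).ne'
  rw [div_eq_div_iff h1 h2]
  ring
end

section
/- For every integer k ≥ 3 and all reals z₁, …, z_k > 0, ∫_{(0,∞)^k} (x₁ + ⋯ + x_k)^{k−3} · (∏_{i=1}^k √x_i) · e^{−Σ_{i=1}^k x_i z_i} dx₁⋯dx_k = (π^{k/2}/2^k) · [ (d/ds)^{k−3} ∏_{i=1}^k (z_i − s)^{−3/2} ] evaluated at s = 0. -/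
open Real MeasureTheory Finset

namespace KontAux

lemma sqrt_le_exp {u : ℝ} (hu : 0 ≤ u) : Real.sqrt u ≤ Real.exp u := by
  have h1 : Real.sqrt u ≤ 1 + u := by
    have : Real.sqrt u ≤ Real.sqrt ((1 + u) ^ 2) :=
      Real.sqrt_le_sqrt (by nlinarith)
    rwa [Real.sqrt_sq (by linarith)] at this
  linarith [Real.add_one_le_exp u]

lemma pow_le_factorial_mul_exp (j : ℕ) {u : ℝ} (hu : 0 ≤ u) :
    u ^ j ≤ (j.factorial : ℝ) * Real.exp u := by
  have h1 : u ^ j / (j.factorial : ℝ) ≤ Real.exp u := by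
    calc u ^ j / (j.factorial : ℝ)
        ≤ ∑ i ∈ range (j + 1), u ^ i / (i.factorial : ℝ) := by
          refine Finset.single_le_sum (f := fun i => u ^ i / (i.factorial : ℝ)) ?_ (Finset.self_mem_range_succ j)
          intro i _
          positivity
      _ ≤ Real.exp u := Real.sum_le_exp_of_nonneg hu _
  have hj : (0:ℝ) < j.factorial := by exact_mod_cast j.factorial_pos
  rw [div_le_iff₀ hj] at h1
  linarith [h1]

/-- 1-D integrand. -/
noncomputable def h (a t : ℝ) : ℝ := Real.sqrt t * Real.exp (-(a * t))

lemma h_nonneg (a t : ℝ) : 0 ≤ h a t := by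
  unfold h; positivity

lemma continuous_h (a : ℝ) : Continuous (h a) := by
  unfold h; fun_prop

lemma h_integrableOn {a : ℝ} (ha : 0 < a) : IntegrableOn (h a) (Set.Ioi 0) := by
  refine Integrable.mono' (g := fun t => Real.sqrt (2 / a) * Real.exp (-(a / 2) * t))
    (((exp_neg_integrableOn_Ioi 0 (half_pos ha)).const_mul _)) ?_ ?_
  · exact (continuous_h a).aestronglyMeasurable
  · rw [ae_restrict_iff' measurableSet_Ioi]
    filter_upwards with t ht
    have ht0 : 0 < t := ht
    rw [Real.norm_of_nonneg (h_nonneg a t)]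
    unfold h
    have h1 : Real.sqrt t ≤ Real.sqrt (2 / a) * Real.exp (a / 2 * t) := by
      have : t = (2 / a) * (a / 2 * t) := by field_simp
      calc Real.sqrt t = Real.sqrt (2 / a) * Real.sqrt (a / 2 * t) := by
            rw [← Real.sqrt_mul (by positivity)]; rw [← this]
        _ ≤ Real.sqrt (2 / a) * Real.exp (a / 2 * t) := by
            gcongr
            exact sqrt_le_exp (by positivity)
    calc Real.sqrt t * Real.exp (-(a * t))
        ≤ (Real.sqrt (2 / a) * Real.exp (a / 2 * t)) * Real.exp (-(a * t)) := by
          gcongr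
      _ = Real.sqrt (2 / a) * Real.exp (-(a / 2) * t) := by
          rw [mul_assoc, ← Real.exp_add]; ring_nf

lemma h_integral {a : ℝ} (ha : 0 < a) :
    ∫ t in Set.Ioi 0, h a t = Real.sqrt π / 2 * a ^ (-(3:ℝ)/2) := by
  have key := Real.integral_rpow_mul_exp_neg_mul_Ioi (a := 3/2) (r := a) (by norm_num) ha
  have h1 : ∀ t ∈ Set.Ioi (0:ℝ), t ^ ((3:ℝ)/2 - 1) * Real.exp (-(a * t)) = h a t := by
    intro t ht
    unfold h
    rw [show (3:ℝ)/2 - 1 = 1/2 by norm_num, ← Real.sqrt_eq_rpow]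
  rw [setIntegral_congr_fun measurableSet_Ioi h1] at key
  rw [key]
  have hG : Real.Gamma (3/2) = Real.sqrt π / 2 := by
    have := Real.Gamma_add_one (s := 1/2) (by norm_num)
    rw [show (1:ℝ)/2 + 1 = 3/2 by norm_num] at this
    rw [this, Real.Gamma_one_half_eq]; ring
  rw [hG, one_div, Real.inv_rpow ha.le, ← Real.rpow_neg ha.le,
    show -(3/2:ℝ) = -3/2 by norm_num, mul_comm]

variable {k : ℕ}

/-- The positive orthant. -/
def S (k : ℕ) : Set (Fin k → ℝ) := Set.univ.pi (fun _ : Fin k => Set.Ioi (0 : ℝ))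

lemma measurableSet_S : MeasurableSet (S k) :=
  MeasurableSet.univ_pi fun _ => measurableSet_Ioi

/-- The master integrand. -/
noncomputable def f (j : ℕ) (c : Fin k → ℝ) (x : Fin k → ℝ) : ℝ :=
  (∑ i, x i) ^ j * (∏ i, Real.sqrt (x i)) * Real.exp (-∑ i, x i * c i)

lemma continuous_f (j : ℕ) (c : Fin k → ℝ) : Continuous (f j c) := by
  unfold f
  fun_prop

lemma bound_f {ε : ℝ} (hε : 0 < ε) {c : Fin k → ℝ} (hc : ∀ i, ε ≤ c i)
    {x : Fin k → ℝ} (hx : x ∈ S k) (j : ℕ) :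
    ‖f j c x‖ ≤ ((j.factorial : ℝ) * (2 / ε) ^ j) * ∏ i, h (ε / 2) (x i) := by
  have hxi : ∀ i, 0 < x i := fun i => hx i (Set.mem_univ i)
  set T := ∑ i, x i with hT
  have hT0 : 0 ≤ T := Finset.sum_nonneg fun i _ => (hxi i).le
  have hP0 : 0 ≤ ∏ i, Real.sqrt (x i) := Finset.prod_nonneg fun i _ => Real.sqrt_nonneg _
  have hfnn : 0 ≤ f j c x := by unfold f; positivity
  rw [Real.norm_of_nonneg hfnn]
  have hprod : ∏ i, h (ε / 2) (x i) = (∏ i, Real.sqrt (x i)) * Real.exp (-(ε / 2) * T) := by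
    unfold h
    rw [Finset.prod_mul_distrib, ← Real.exp_sum]
    congr 2
    rw [hT, Finset.mul_sum]
    congr 1; funext i; ring
  have hexp : Real.exp (-∑ i, x i * c i) ≤ Real.exp (-(ε / 2) * T) * Real.exp (-(ε / 2) * T) := by
    rw [← Real.exp_add]
    apply Real.exp_le_exp.mpr
    have : ε * T ≤ ∑ i, x i * c i := by
      rw [hT, Finset.mul_sum]
      refine Finset.sum_le_sum fun i _ => ?_
      rw [mul_comm (x i) (c i)]
      exact mul_le_mul_of_nonneg_right (hc i) (hxi i).le
    linarith
  have hTj : T ^ j * Real.exp (-(ε / 2) * T) ≤ (j.factorial : ℝ) * (2 / ε) ^ j := by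
    have hu : (0:ℝ) ≤ ε / 2 * T := by positivity
    have h1 : (ε / 2 * T) ^ j ≤ (j.factorial : ℝ) * Real.exp (ε / 2 * T) :=
      pow_le_factorial_mul_exp j hu
    have h2 : T ^ j ≤ (j.factorial : ℝ) * (2 / ε) ^ j * Real.exp (ε / 2 * T) := by
      have hT2 : T ^ j = (2 / ε) ^ j * (ε / 2 * T) ^ j := by
        rw [← mul_pow]
        congr 1
        field_simp
      rw [hT2]
      calc (2 / ε) ^ j * (ε / 2 * T) ^ j
          ≤ (2 / ε) ^ j * ((j.factorial : ℝ) * Real.exp (ε / 2 * T)) := by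
            gcongr
        _ = (j.factorial : ℝ) * (2 / ε) ^ j * Real.exp (ε / 2 * T) := by ring
    calc T ^ j * Real.exp (-(ε / 2) * T)
        ≤ ((j.factorial : ℝ) * (2 / ε) ^ j * Real.exp (ε / 2 * T)) * Real.exp (-(ε / 2) * T) := by
          gcongr
      _ = (j.factorial : ℝ) * (2 / ε) ^ j * (Real.exp (ε / 2 * T) * Real.exp (-(ε / 2) * T)) := by
          ring
      _ = (j.factorial : ℝ) * (2 / ε) ^ j := by
          rw [← Real.exp_add]; ring_nf; rw [Real.exp_zero, mul_one]
  calc f j c x = T ^ j * (∏ i, Real.sqrt (x i)) * Real.exp (-∑ i, x i * c i) := rfl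
    _ ≤ T ^ j * (∏ i, Real.sqrt (x i)) * (Real.exp (-(ε / 2) * T) * Real.exp (-(ε / 2) * T)) := by
        have : 0 ≤ T ^ j * ∏ i, Real.sqrt (x i) := by positivity
        exact mul_le_mul_of_nonneg_left hexp this
    _ = (T ^ j * Real.exp (-(ε / 2) * T)) * ((∏ i, Real.sqrt (x i)) * Real.exp (-(ε / 2) * T)) := by
        ring
    _ ≤ ((j.factorial : ℝ) * (2 / ε) ^ j) * ((∏ i, Real.sqrt (x i)) * Real.exp (-(ε / 2) * T)) := by
        have : 0 ≤ (∏ i, Real.sqrt (x i)) * Real.exp (-(ε / 2) * T) := by positivity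
        exact mul_le_mul_of_nonneg_right hTj this
    _ = ((j.factorial : ℝ) * (2 / ε) ^ j) * ∏ i, h (ε / 2) (x i) := by rw [hprod]

/-- The dominating function. -/
noncomputable def g (k j : ℕ) (ε : ℝ) (x : Fin k → ℝ) : ℝ :=
  ((j.factorial : ℝ) * (2 / ε) ^ j) * ∏ i, Set.indicator (Set.Ioi 0) (h (ε / 2)) (x i)

lemma integrable_g {ε : ℝ} (hε : 0 < ε) (j : ℕ) : Integrable (g k j ε) := by
  unfold g
  refine Integrable.const_mul ?_ _
  refine Integrable.fintype_prod fun i => ?_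
  rw [integrable_indicator_iff measurableSet_Ioi]
  exact h_integrableOn (half_pos hε)

lemma g_eq_on_S {ε : ℝ} (j : ℕ) {x : Fin k → ℝ} (hx : x ∈ S k) :
    g k j ε x = ((j.factorial : ℝ) * (2 / ε) ^ j) * ∏ i, h (ε / 2) (x i) := by
  unfold g
  congr 1
  exact Finset.prod_congr rfl fun i _ => Set.indicator_of_mem (hx i (Set.mem_univ i)) _

lemma integrable_f {ε : ℝ} (hε : 0 < ε) {c : Fin k → ℝ} (hc : ∀ i, ε ≤ c i) (j : ℕ) :
    IntegrableOn (f j c) (S k) := by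
  refine Integrable.mono' ((integrable_g hε j).restrict (s := S k))
    (continuous_f j c).aestronglyMeasurable ?_
  rw [ae_restrict_iff' measurableSet_S]
  filter_upwards with x hx
  rw [g_eq_on_S j hx]
  exact bound_f hε hc hx j

lemma fubini_val {c : Fin k → ℝ} (hc : ∀ i, 0 < c i) :
    ∫ x in S k, (∏ i, Real.sqrt (x i)) * Real.exp (-∑ i, x i * c i)
      = ∏ i, (Real.sqrt π / 2 * (c i) ^ (-(3:ℝ)/2)) := by
  have h1 : ∀ x : Fin k → ℝ,
      (∏ i, Real.sqrt (x i)) * Real.exp (-∑ i, x i * c i) = ∏ i, h (c i) (x i) := by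
    intro x
    unfold h
    rw [Finset.prod_mul_distrib, ← Real.exp_sum]
    congr 2
    rw [← Finset.sum_neg_distrib]
    congr 1; funext i; ring
  simp_rw [h1]
  rw [← integral_indicator measurableSet_S]
  have h2 : Set.indicator (S k) (fun x => ∏ i, h (c i) (x i))
      = fun x : Fin k → ℝ => ∏ i, Set.indicator (Set.Ioi 0) (h (c i)) (x i) := by
    funext x
    by_cases hx : x ∈ S k
    · rw [Set.indicator_of_mem hx]
      exact (Finset.prod_congr rfl fun i _ =>
        (Set.indicator_of_mem (hx i (Set.mem_univ i)) _)).symm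
    · rw [Set.indicator_of_notMem hx]
      have hex : ∃ i, x i ∉ Set.Ioi (0:ℝ) := by
        by_contra hcon
        push_neg at hcon
        exact hx fun i _ => hcon i
      obtain ⟨i, hi⟩ := hex
      exact (Finset.prod_eq_zero (Finset.mem_univ i)
        (Set.indicator_of_notMem hi _)).symm
  rw [h2, MeasureTheory.volume_pi, MeasureTheory.integral_fintype_prod_eq_prod
    (fun i t => Set.indicator (Set.Ioi 0) (h (c i)) t)]
  exact Finset.prod_congr rfl fun i _ => by
    rw [integral_indicator measurableSet_Ioi, h_integral (hc i)]

end KontAux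

/-- The Laplace-transform identity relating the genus-zero `k`-point resolvents
of the Gaussian Kontsevich model to their Laplace transforms: for `k ≥ 3` and
`z₁, …, z_k > 0`,
`∫_{(0,∞)^k} (Σᵢ xᵢ)^{k−3} · ∏ᵢ √xᵢ · e^{−Σᵢ xᵢzᵢ} dx
  = (π^{k/2}/2^k) · (d/ds)^{k−3} [ ∏ᵢ (zᵢ − s)^{−3/2} ] |_{s=0}`. -/
theorem laplace_transform_genus_zero_resolvent (k : ℕ) (hk : 3 ≤ k)
    (z : Fin k → ℝ) (hz : ∀ i, 0 < z i) :
    (∫ x : Fin k → ℝ in Set.univ.pi (fun _ : Fin k => Set.Ioi (0 : ℝ)),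
        (∑ i, x i) ^ (k - 3) * (∏ i, Real.sqrt (x i)) *
          Real.exp (-∑ i, x i * z i)) =
      π ^ ((k : ℝ) / 2) / 2 ^ k *
        iteratedDeriv (k - 3) (fun s : ℝ => ∏ i, (z i - s) ^ (-(3 : ℝ) / 2)) 0 := by
  haveI : Nonempty (Fin k) := ⟨⟨0, by omega⟩⟩
  set M := Finset.univ.inf' Finset.univ_nonempty z with hMdef
  have hM0 : 0 < M := by
    rw [hMdef, Finset.lt_inf'_iff]
    exact fun i _ => hz i
  have hMle : ∀ i, M ≤ z i := fun i => Finset.inf'_le _ (Finset.mem_univ i)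
  set F : ℕ → ℝ → ℝ := fun j s => ∫ x in KontAux.S k, KontAux.f j (fun i => z i - s) x
    with hF
  set C := (Real.sqrt π / 2) ^ k with hC
  set Hf : ℝ → ℝ := fun s => ∏ i, (z i - s) ^ (-(3:ℝ)/2) with hHf
  -- the derivative step, by differentiation under the integral sign
  have hstep : ∀ j : ℕ, ∀ s ∈ Set.Iio M, HasDerivAt (F j) (F (j + 1) s) s := by
    intro j s hs
    have hs' : s < M := hs
    set ε := (M - s) / 2 with hεdef
    have hε : 0 < ε := half_pos (by linarith)
    have key := hasDerivAt_integral_of_dominated_loc_of_deriv_le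
      (μ := volume.restrict (KontAux.S k))
      (F := fun t x => KontAux.f j (fun i => z i - t) x)
      (F' := fun t x => KontAux.f (j + 1) (fun i => z i - t) x)
      (x₀ := s) (s := Metric.ball s ε)
      (bound := KontAux.g k (j + 1) ε) (Metric.ball_mem_nhds s hε)
      (Filter.Eventually.of_forall fun t =>
        (KontAux.continuous_f j _).aestronglyMeasurable)
      (KontAux.integrable_f hε (fun i => by
        have := hMle i
        rw [hεdef]
        linarith) j)
      ((KontAux.continuous_f (j + 1) _).aestronglyMeasurable)
      ?_ ((KontAux.integrable_g hε (j + 1)).restrict) ?_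
    · exact key.2
    · -- the uniform bound
      rw [ae_restrict_iff' KontAux.measurableSet_S]
      filter_upwards with x hx
      intro t ht
      have habs : |t - s| < ε := by
        simpa [Real.dist_eq] using ht
      have htc : ∀ i, ε ≤ z i - t := by
        intro i
        have h1 := (abs_lt.mp habs).2
        have h2 := hMle i
        rw [hεdef] at h1 ⊢
        linarith
      calc ‖KontAux.f (j + 1) (fun i => z i - t) x‖
          ≤ (((j + 1).factorial : ℝ) * (2 / ε) ^ (j + 1)) * ∏ i, KontAux.h (ε / 2) (x i) :=
            KontAux.bound_f hε htc hx (j + 1)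
        _ = KontAux.g k (j + 1) ε x := (KontAux.g_eq_on_S _ hx).symm
    · -- pointwise differentiability in the parameter
      filter_upwards with x
      intro t _
      have harg : ∀ u : ℝ, -∑ i, x i * (z i - u) = u * (∑ i, x i) + (-∑ i, x i * z i) := by
        intro u
        simp only [mul_sub, Finset.sum_sub_distrib]
        rw [← Finset.sum_mul]
        ring
      have hd : HasDerivAt (fun u : ℝ => u * (∑ i, x i) + (-∑ i, x i * z i)) (∑ i, x i) t :=
        (hasDerivAt_mul_const _).add_const _
      have hd2 := (hd.exp).const_mul ((∑ i, x i) ^ j * ∏ i, Real.sqrt (x i))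
      have heq : (fun u : ℝ => KontAux.f j (fun i => z i - u) x)
          = fun u : ℝ => ((∑ i, x i) ^ j * ∏ i, Real.sqrt (x i)) *
              Real.exp (u * (∑ i, x i) + (-∑ i, x i * z i)) := by
        funext u
        unfold KontAux.f
        rw [harg u]
      rw [heq]
      refine hd2.congr_deriv ?_
      unfold KontAux.f
      rw [harg t, pow_succ]
      ring
  -- comparison with the iterated derivative of the product
  have hcmp : ∀ j : ℕ, ∀ s ∈ Set.Iio M, F j s = C * iteratedDeriv j Hf s := by
    intro j
    induction j with
    | zero =>
      intro s hs
      have hs' : s < M := hs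
      rw [iteratedDeriv_zero]
      have hc : ∀ i, 0 < z i - s := fun i => sub_pos.mpr (lt_of_lt_of_le hs' (hMle i))
      have h0 : F 0 s = ∫ x in KontAux.S k,
          (∏ i, Real.sqrt (x i)) * Real.exp (-∑ i, x i * (z i - s)) := by
        rw [hF]
        simp only [KontAux.f, pow_zero, one_mul]
      rw [h0, KontAux.fubini_val hc, hHf, hC, Finset.prod_mul_distrib, Finset.prod_const,
        Finset.card_univ, Fintype.card_fin]
    | succ j ih =>
      intro s hs
      have hev : F j =ᶠ[nhds s] (fun t => C * iteratedDeriv j Hf t) :=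
        Filter.eventuallyEq_of_mem (isOpen_Iio.mem_nhds hs) ih
      calc F (j + 1) s = deriv (F j) s := ((hstep j s hs).deriv).symm
        _ = deriv (fun t => C * iteratedDeriv j Hf t) s := hev.deriv_eq
        _ = C * deriv (iteratedDeriv j Hf) s := deriv_const_mul_field C
        _ = C * iteratedDeriv (j + 1) Hf s := by rw [← iteratedDeriv_succ]
  have hLHS : (∫ x : Fin k → ℝ in Set.univ.pi (fun _ : Fin k => Set.Ioi (0 : ℝ)),
      (∑ i, x i) ^ (k - 3) * (∏ i, Real.sqrt (x i)) *
        Real.exp (-∑ i, x i * z i)) = F (k - 3) 0 := by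
    rw [hF]
    simp only [KontAux.f, KontAux.S, sub_zero]
  have hCval : C = π ^ ((k : ℝ) / 2) / 2 ^ k := by
    rw [hC, div_pow]
    congr 1
    rw [Real.sqrt_eq_rpow, ← Real.rpow_natCast (π ^ ((1:ℝ)/2)) k, ← Real.rpow_mul pi_pos.le]
    congr 1
    ring
  rw [hLHS, hcmp (k - 3) 0 hM0, hCval]
end

section
/- Let N ≥ 1 be an integer and set ν = N − 1/2. Define the Chebyshev function of half-integer order T_ν : [−1,∞) → ℝ by T_ν(τ) = cos(ν·arccos τ) for τ ∈ [−1,1] and T_ν(τ) = cosh(ν·arcosh τ) for τ ≥ 1. Then for every real l > 0 the integral converges and l·∫_{−1}^{∞} T_ν(τ)·e^{−τ·l} dτ = (−1)^{N−1} · ν · √(π/(2l)) · e^{l} · Σ_{j=0}^{N−1} (−1)^j · (N−1+j)! / ( j!·(N−1−j)! ) · (2l)^{−j}. -/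
open Real MeasureTheory Finset

/-- The inverse hyperbolic cosine, `arcosh x = log (x + √(x² − 1))`. -/
noncomputable def arcosh (x : ℝ) : ℝ := Real.log (x + Real.sqrt (x ^ 2 - 1))

/-- The Chebyshev function of (half-integer) order `ν` on `[−1,∞)`:
`T_ν(τ) = cos(ν·arccos τ)` for `τ ∈ [−1,1]` and `T_ν(τ) = cosh(ν·arcosh τ)`
for `τ ≥ 1`. -/
noncomputable def chebHalf (ν τ : ℝ) : ℝ :=
  if τ ≤ 1 then Real.cos (ν * Real.arccos τ) else Real.cosh (ν * _root_.arcosh τ)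

noncomputable def cc (n k : ℕ) : ℝ :=
  if k ≤ n then
    (-1 : ℝ) ^ (n + k) * (2 * n + 1) * (Nat.factorial (n + k)) * 4 ^ k /
      ((Nat.factorial (n - k)) * (Nat.factorial (2 * k + 1)))
  else 0

lemma cc_of_le {n k m : ℕ} (h : n = k + m) :
    cc n k = (-1 : ℝ) ^ m * (2 * (k + m) + 1) * (Nat.factorial (2 * k + m)) * 4 ^ k /
      ((Nat.factorial m) * (Nat.factorial (2 * k + 1))) := by
  subst h
  rw [cc, if_pos (Nat.le_add_right _ _)]
  have h1 : k + m + k = 2 * k + m := by omega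
  have h2 : k + m - k = m := by omega
  rw [h1, h2]
  have h3 : (-1 : ℝ) ^ (2 * k + m) = (-1) ^ m := by
    rw [pow_add, pow_mul, neg_one_sq, one_pow, one_mul]
  rw [h3]
  push_cast
  ring

lemma cc_of_gt {n k : ℕ} (h : n < k) : cc n k = 0 := by
  rw [cc, if_neg (by omega)]

lemma fac_ne (m : ℕ) : (Nat.factorial m : ℝ) ≠ 0 :=
  Nat.cast_ne_zero.2 (Nat.factorial_ne_zero m)

lemma cc_rec (n k : ℕ) :
    cc (n + 2) k = 4 * (if k = 0 then 0 else cc (n + 1) (k - 1)) - 2 * cc (n + 1) k - cc n k := by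
  match k with
  | 0 =>
    rw [if_pos rfl]
    rw [cc_of_le (show n + 2 = 0 + (n + 2) by omega),
        cc_of_le (show n + 1 = 0 + (n + 1) by omega),
        cc_of_le (show n = 0 + n by omega)]
    simp only [Nat.factorial]
    simp only [Nat.add_eq, Nat.zero_add, Nat.mul_zero]
    push_cast
    field_simp
    ring
  | (k + 1) =>
    rw [if_neg (by omega), Nat.add_sub_cancel]
    rcases Nat.lt_or_ge k n with h | h
    · -- generic : k + 1 ≤ n, n = (k+1) + m with m = n - k - 1
      obtain ⟨m, rfl⟩ : ∃ m, n = (k + 1) + m := ⟨n - (k + 1), by omega⟩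
      rw [cc_of_le (show k + 1 + m + 2 = (k + 1) + (m + 2) by omega),
          cc_of_le (show k + 1 + m + 1 = k + (m + 2) by omega),
          cc_of_le (show k + 1 + m + 1 = (k + 1) + (m + 1) by omega),
          cc_of_le (show k + 1 + m = (k + 1) + m by omega)]
      have e1 : 2 * (k + 1) + (m + 2) = (2 * k + m) + 4 := by omega
      have e2 : 2 * k + (m + 2) = (2 * k + m) + 2 := by omega
      have e3 : 2 * (k + 1) + (m + 1) = (2 * k + m) + 3 := by omega
      have e4 : 2 * (k + 1) + m = (2 * k + m) + 2 := by omega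
      have e5 : 2 * (k + 1) + 1 = (2 * k + 1) + 2 := by omega
      rw [e1, e2, e3, e4, e5]
      have f1 : ∀ a : ℕ, (Nat.factorial (a + 1) : ℝ) = (a + 1) * Nat.factorial a := by
        intro a; rw [Nat.factorial_succ]; push_cast; ring
      rw [show (2*k+m)+4 = ((2*k+m)+3)+1 by omega, f1, show (2*k+m)+3 = ((2*k+m)+2)+1 by omega,
          f1, show (2*k+1)+2 = ((2*k+1)+1)+1 by omega, f1 ((2*k+1)+1), f1 (2*k+1),
          f1 (m+1), f1 m]
      field_simp
      push_cast
      ring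
    · rcases Nat.lt_or_ge (n + 1) k with h2 | h2
      · -- k ≥ n + 2 : everything vanishes
        rw [cc_of_gt (show n + 2 < k + 1 by omega), cc_of_gt (show n + 1 < k by omega),
            cc_of_gt (show n + 1 < k + 1 by omega), cc_of_gt (show n < k + 1 by omega)]
        ring
      · rcases Nat.eq_or_lt_of_le h2 with h3 | h3
        · -- k = n + 1
          subst h3
          rw [cc_of_le (show n + 2 = (n + 1 + 1) + 0 by omega),
              cc_of_le (show n + 1 = (n + 1) + 0 by omega),
              cc_of_gt (show n + 1 < n + 1 + 1 by omega),
              cc_of_gt (show n < n + 1 + 1 by omega)]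
          have fs : ∀ a : ℕ, (Nat.factorial (a + 1) : ℝ) = (a + 1) * Nat.factorial a := by
            intro a; rw [Nat.factorial_succ]; push_cast; ring
          rw [show 2 * (n + 1 + 1) + 0 = ((2 * (n + 1)) + 1) + 1 by omega, fs,
              show (2 * (n + 1)) + 1 = (2 * (n + 1)) + 1 from rfl, fs,
              show 2 * (n + 1 + 1) + 1 = (((2 * (n + 1)) + 1) + 1) + 1 by omega, fs, fs, fs,
              show 2 * (n + 1) + 0 = 2 * (n + 1) by omega]
          have := fac_ne (2 * (n + 1))
          norm_num [Nat.factorial_zero]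
          field_simp
          ring
        · -- k = n
          have h4 : k = n := by omega
          subst h4
          rw [cc_of_le (show k + 2 = (k + 1) + 1 by omega),
              cc_of_le (show k + 1 = k + 1 from rfl),
              cc_of_le (show k + 1 = (k + 1) + 0 by omega),
              cc_of_gt (show k < k + 1 by omega)]
          have fs : ∀ a : ℕ, (Nat.factorial (a + 1) : ℝ) = (a + 1) * Nat.factorial a := by
            intro a; rw [Nat.factorial_succ]; push_cast; ring
          have hA : (Nat.factorial (2 * (k + 1) + 1) : ℝ)
              = (2 * k + 3) * ((2 * k + 2) * ((2 * k + 1) * Nat.factorial (2 * k))) := by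
            rw [show 2 * (k + 1) + 1 = (((2 * k) + 1) + 1) + 1 by omega, fs, fs, fs]
            push_cast; ring
          have hB : (Nat.factorial (2 * (k + 1) + 0) : ℝ)
              = (2 * k + 2) * ((2 * k + 1) * Nat.factorial (2 * k)) := by
            rw [show 2 * (k + 1) + 0 = ((2 * k) + 1) + 1 by omega, fs, fs]
            push_cast; ring
          have hC : (Nat.factorial (2 * k + 1) : ℝ) = (2 * k + 1) * Nat.factorial (2 * k) := by
            rw [show 2 * k + 1 = (2 * k) + 1 from rfl, fs]; push_cast; ring
          rw [hA, hB, hC]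
          have := fac_ne (2 * k)
          have := fac_ne k
          norm_num [Nat.factorial_zero]
          field_simp
          ring

noncomputable def fp (n : ℕ) (x : ℝ) : ℝ := ∑ k ∈ Finset.range (n + 1), cc n k * x ^ (2 * k + 1)

lemma fp_ext {n m : ℕ} (h : n + 1 ≤ m) (x : ℝ) :
    fp n x = ∑ k ∈ Finset.range m, cc n k * x ^ (2 * k + 1) := by
  rw [fp]
  refine (Finset.sum_subset (f := fun k => cc n k * x ^ (2 * k + 1))
    (Finset.range_subset_range.2 h) fun k _ hk => ?_)
  rw [Finset.mem_range] at hk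
  rw [cc_of_gt (by omega), zero_mul]

lemma fp_rec (n : ℕ) (x : ℝ) :
    fp (n + 2) x = (4 * x ^ 2 - 2) * fp (n + 1) x - fp n x := by
  rw [fp_ext (show n + 1 + 1 ≤ n + 3 by omega) x, fp_ext (show n + 1 ≤ n + 3 by omega) x, fp]
  have h1 : ∀ k ∈ Finset.range (n + 3), cc (n + 2) k * x ^ (2 * k + 1) =
      4 * ((if k = 0 then 0 else cc (n + 1) (k - 1)) * x ^ (2 * k + 1))
      - 2 * (cc (n + 1) k * x ^ (2 * k + 1)) - cc n k * x ^ (2 * k + 1) := by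
    intro k _
    rw [cc_rec]; ring
  rw [show n + 2 + 1 = n + 3 from rfl, Finset.sum_congr rfl h1]
  rw [Finset.sum_sub_distrib, Finset.sum_sub_distrib, ← Finset.mul_sum, ← Finset.mul_sum]
  have h2 : ∑ k ∈ Finset.range (n + 3), (if k = 0 then 0 else cc (n + 1) (k - 1)) * x ^ (2 * k + 1)
      = x ^ 2 * ∑ k ∈ Finset.range (n + 3), cc (n + 1) k * x ^ (2 * k + 1) := by
    conv_rhs => rw [Finset.mul_sum, Finset.sum_range_succ]
    rw [cc_of_gt (show n + 1 < n + 2 by omega), zero_mul, mul_zero, add_zero,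
        Finset.sum_range_succ' _ (n + 2)]
    simp [Nat.succ_ne_zero, Nat.add_sub_cancel]
    exact Finset.sum_congr rfl fun k _ => by ring
  rw [h2]; ring

lemma fp_apply_g (g : ℝ → ℝ) (hg0 : g 0 = 1)
    (hg : ∀ x y, g (x + y) + g (x - y) = 2 * g x * g y) :
    ∀ (n : ℕ) (φ : ℝ), g ((2 * (n : ℝ) + 1) * φ) = fp n (g φ) := by
  have h2 : ∀ φ : ℝ, g (2 * φ) = 2 * g φ ^ 2 - 1 := by
    intro φ
    have h := hg φ φ
    rw [show φ - φ = 0 by ring, hg0] at h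
    rw [show 2 * φ = φ + φ by ring]
    nlinarith [h]
  intro n
  induction n using Nat.twoStepInduction with
  | zero =>
    intro φ
    have : fp 0 (g φ) = g φ := by
      simp [fp, cc, Nat.factorial]
    rw [this]
    norm_num
  | one =>
    intro φ
    have ha := hg (2 * φ) φ
    rw [show 2 * φ + φ = 3 * φ by ring, show 2 * φ - φ = φ by ring, h2 φ] at ha
    have hfp : fp 1 (g φ) = 4 * g φ ^ 3 - 3 * g φ := by
      simp [fp, cc, Finset.sum_range_succ, Nat.factorial]
      ring
    rw [hfp]
    norm_num
    linarith [ha, sq_nonneg (g φ)]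
  | more n ih1 ih2 =>
    intro φ
    push_cast
    rw [show (2 * ((n : ℝ) + 2) + 1) * φ = (2 * (n : ℝ) + 3) * φ + 2 * φ by ring]
    have hb := hg ((2 * (n : ℝ) + 3) * φ) (2 * φ)
    rw [h2 φ, show (2 * (n : ℝ) + 3) * φ - 2 * φ = (2 * (n : ℝ) + 1) * φ by ring] at hb
    have ihB : g ((2 * (n : ℝ) + 3) * φ) = fp (n + 1) (g φ) := by
      have h := ih2 φ
      push_cast at h
      rw [show (2 * ((n : ℝ) + 1) + 1) * φ = (2 * (n : ℝ) + 3) * φ by ring] at h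
      exact h
    have ihA := ih1 φ
    rw [fp_rec]
    have : g ((2 * (n : ℝ) + 3) * φ + 2 * φ)
        = 2 * g ((2 * (n : ℝ) + 3) * φ) * (2 * g φ ^ 2 - 1) - g ((2 * (n : ℝ) + 1) * φ) := by
      linarith [hb]
    rw [this, ihA, ihB]
    ring

lemma cos_fp (n : ℕ) (φ : ℝ) : Real.cos ((2 * (n : ℝ) + 1) * φ) = fp n (Real.cos φ) :=
  fp_apply_g Real.cos Real.cos_zero
    (fun x y => by rw [Real.cos_add, Real.cos_sub]; ring) n φ

lemma cosh_fp (n : ℕ) (φ : ℝ) : Real.cosh ((2 * (n : ℝ) + 1) * φ) = fp n (Real.cosh φ) :=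
  fp_apply_g Real.cosh Real.cosh_zero
    (fun x y => by rw [Real.cosh_add, Real.cosh_sub]; ring) n φ

lemma cosh_arcosh {τ : ℝ} (h : 1 ≤ τ) : Real.cosh (_root_.arcosh τ) = τ := by
  have h0 : (0 : ℝ) ≤ τ ^ 2 - 1 := by nlinarith
  have hs : Real.sqrt (τ ^ 2 - 1) ^ 2 = τ ^ 2 - 1 := Real.sq_sqrt h0
  have hy : 0 < τ + Real.sqrt (τ ^ 2 - 1) := by
    have := Real.sqrt_nonneg (τ ^ 2 - 1); linarith
  have hinv : (τ + Real.sqrt (τ ^ 2 - 1))⁻¹ = τ - Real.sqrt (τ ^ 2 - 1) := by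
    refine inv_eq_of_mul_eq_one_right ?_
    nlinarith [hs]
  rw [_root_.arcosh, Real.cosh_eq, Real.exp_log hy, Real.exp_neg, Real.exp_log hy, hinv]; ring

lemma chebHalf_eq_fp (n : ℕ) {τ : ℝ} (hτ : -1 ≤ τ) :
    chebHalf ((n : ℝ) + 1 / 2) τ = fp n (Real.sqrt ((1 + τ) / 2)) := by
  rw [chebHalf]
  split_ifs with h
  · -- −1 ≤ τ ≤ 1
    set φ := Real.arccos τ / 2 with hφ
    have h1 : ((n : ℝ) + 1 / 2) * Real.arccos τ = (2 * (n : ℝ) + 1) * φ := by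
      rw [hφ]; ring
    rw [h1, cos_fp]
    have hφ0 : 0 ≤ φ := by
      rw [hφ]; have := Real.arccos_nonneg τ; linarith
    have hφπ : φ ≤ π / 2 := by
      rw [hφ]; have := Real.arccos_le_pi τ; linarith
    have hcn : 0 ≤ Real.cos φ :=
      Real.cos_nonneg_of_mem_Icc ⟨by linarith [Real.pi_pos], hφπ⟩
    have h2 : Real.cos (2 * φ) = τ := by
      rw [hφ, show 2 * (Real.arccos τ / 2) = Real.arccos τ by ring]
      exact Real.cos_arccos hτ h
    have h3 : (1 + τ) / 2 = Real.cos φ ^ 2 := by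
      have := Real.cos_two_mul φ
      rw [h2] at this; linarith
    rw [h3, Real.sqrt_sq hcn]
  · -- τ > 1
    push_neg at h
    set t := _root_.arcosh τ / 2 with ht
    have h1 : ((n : ℝ) + 1 / 2) * _root_.arcosh τ = (2 * (n : ℝ) + 1) * t := by
      rw [ht]; ring
    rw [h1, cosh_fp]
    have h2 : Real.cosh (2 * t) = τ := by
      rw [ht, show 2 * (_root_.arcosh τ / 2) = _root_.arcosh τ by ring]
      exact _root_.cosh_arcosh h.le
    have h3 : (1 + τ) / 2 = Real.cosh t ^ 2 := by
      have h5 := Real.cosh_two_mul t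
      have h6 := Real.sinh_sq t
      rw [h2] at h5; linarith
    rw [h3, Real.sqrt_sq (Real.cosh_pos t).le]

lemma Gamma_nat_half (k : ℕ) :
    Real.Gamma ((k : ℝ) + 1 / 2)
      = Real.sqrt π * (Nat.factorial (2 * k)) / (4 ^ k * Nat.factorial k) := by
  induction k with
  | zero =>
    rw [show ((0:ℕ):ℝ) + 1/2 = 1/2 by norm_num, Real.Gamma_one_half_eq]
    norm_num [Nat.factorial]
  | succ k ih =>
    have h1 : ((k + 1 : ℕ) : ℝ) + 1 / 2 = ((k : ℝ) + 1 / 2) + 1 := by push_cast; ring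
    rw [h1, Real.Gamma_add_one (by positivity), ih]
    have h2 : (Nat.factorial (2 * (k + 1)) : ℝ)
        = (2 * k + 2) * ((2 * k + 1) * Nat.factorial (2 * k)) := by
      rw [show 2 * (k + 1) = ((2 * k) + 1) + 1 by omega, Nat.factorial_succ, Nat.factorial_succ]
      push_cast; ring
    have h3 : (Nat.factorial (k + 1) : ℝ) = (k + 1) * Nat.factorial k := by
      rw [Nat.factorial_succ]; push_cast; ring
    rw [h2, h3]
    have h4 := fac_ne k
    have h5 : ((k : ℝ) + 1) ≠ 0 := by positivity
    field_simp
    ring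

lemma base_integrable (k : ℕ) {l : ℝ} (hl : 0 < l) :
    IntegrableOn (fun s : ℝ => s ^ k * Real.sqrt s * Real.exp (-s * l)) (Set.Ioi 0) := by
  have h := integrableOn_rpow_mul_exp_neg_mul_rpow
    (show (-1 : ℝ) < (k : ℝ) + 1 / 2 by have : (0:ℝ) ≤ k := Nat.cast_nonneg k; linarith) (by norm_num : (0:ℝ) < 1) hl
  refine (h.congr_fun (fun s hs => ?_) measurableSet_Ioi)
  have hs0 : (0 : ℝ) < s := hs
  beta_reduce
  rw [Real.rpow_one, Real.rpow_add hs0, Real.rpow_natCast, ← Real.sqrt_eq_rpow]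
  ring_nf

lemma base_integral (k : ℕ) {l : ℝ} (hl : 0 < l) :
    ∫ s in Set.Ioi (0 : ℝ), s ^ k * Real.sqrt s * Real.exp (-s * l)
      = (1 / l) ^ ((k : ℝ) + 3 / 2) * Real.Gamma ((k : ℝ) + 3 / 2) := by
  rw [← integral_rpow_mul_exp_neg_mul_Ioi (show (0:ℝ) < (k : ℝ) + 3 / 2 by positivity) hl]
  refine setIntegral_congr_fun measurableSet_Ioi (fun s hs => ?_)
  have hs0 : (0 : ℝ) < s := hs
  rw [show ((k : ℝ) + 3 / 2) - 1 = (k : ℝ) + 1 / 2 by ring,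
      Real.rpow_add hs0, Real.rpow_natCast, ← Real.sqrt_eq_rpow]
  ring_nf

lemma preim_Ici : (fun x : ℝ => x + 1) ⁻¹' (Set.Ici 0) = Set.Ici (-1 : ℝ) := by
  ext x
  simp only [Set.mem_preimage, Set.mem_Ici]
  constructor <;> intro <;> linarith

lemma shift_integrableOn {g : ℝ → ℝ} (hg : IntegrableOn g (Set.Ici (0 : ℝ))) :
    IntegrableOn (fun τ : ℝ => g (τ + 1)) (Set.Ici (-1 : ℝ)) := by
  have h := (measurePreserving_add_right (volume : Measure ℝ) 1).integrableOn_comp_preimage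
    (measurableEmbedding_addRight 1) (f := g) (s := Set.Ici (0 : ℝ))
  rw [preim_Ici] at h
  exact h.2 hg

lemma shift_integral (g : ℝ → ℝ) :
    ∫ τ in Set.Ici (-1 : ℝ), g (τ + 1) = ∫ s in Set.Ici (0 : ℝ), g s := by
  have h := (measurePreserving_add_right (volume : Measure ℝ) 1).setIntegral_preimage_emb
    (measurableEmbedding_addRight 1) g (Set.Ici (0 : ℝ))
  rw [preim_Ici] at h
  exact h

set_option maxHeartbeats 2000000 in
/-- For `ν = N − 1/2` and every `l > 0`, the integral
`∫_{−1}^{∞} T_ν(τ)·e^{−τ·l} dτ` converges, and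
`l·∫_{−1}^{∞} T_ν(τ)·e^{−τ·l} dτ
 = (−1)^{N−1}·ν·√(π/(2l))·e^l·Σ_{j=0}^{N−1} (−1)^j·(N−1+j)!/(j!·(N−1−j)!)·(2l)^{−j}`,
the elementary closed form (up to the branch factor `(−1)^{N−1}`) of
`ν·K_ν(−l)` for the modified Bessel function of half-integer order. -/
theorem chebyshev_laplace_transform_bessel (N : ℕ) (hN : 1 ≤ N) (l : ℝ) (hl : 0 < l) :
    IntegrableOn (fun τ : ℝ => chebHalf ((N : ℝ) - 1 / 2) τ * Real.exp (-τ * l))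
        (Set.Ici (-1 : ℝ)) ∧
    l * ∫ τ in Set.Ici (-1 : ℝ), chebHalf ((N : ℝ) - 1 / 2) τ * Real.exp (-τ * l) =
      (-1 : ℝ) ^ (N - 1) * ((N : ℝ) - 1 / 2) * Real.sqrt (π / (2 * l)) * Real.exp l *
        ∑ j ∈ Finset.range N,
          (-1 : ℝ) ^ j * (Nat.factorial (N - 1 + j) : ℝ) /
              ((Nat.factorial j : ℝ) * (Nat.factorial (N - 1 - j) : ℝ)) *
            (2 * l) ^ (-(j : ℤ)) := by
  obtain ⟨n, rfl⟩ : ∃ n, N = n + 1 := ⟨N - 1, by omega⟩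
  have hs2 : Real.sqrt 2 ≠ 0 := by positivity
  have hsl : Real.sqrt l ≠ 0 := by positivity
  have hel : Real.exp l ≠ 0 := (Real.exp_pos l).ne'
  -- pointwise identity on `Ici (-1)`
  have hpt : ∀ τ ∈ Set.Ici (-1 : ℝ),
      chebHalf (((n + 1 : ℕ) : ℝ) - 1 / 2) τ * Real.exp (-τ * l)
        = ∑ k ∈ Finset.range (n + 1),
            cc n k * Real.exp l / (2 ^ k * Real.sqrt 2) *
              ((τ + 1) ^ k * Real.sqrt (τ + 1) * Real.exp (-(τ + 1) * l)) := by
    intro τ hτ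
    have hτ' : (-1 : ℝ) ≤ τ := hτ
    have hcast : ((n + 1 : ℕ) : ℝ) - 1 / 2 = (n : ℝ) + 1 / 2 := by push_cast; ring
    rw [hcast, chebHalf_eq_fp n hτ', fp, Finset.sum_mul]
    refine Finset.sum_congr rfl fun k _ => ?_
    have h1 : (0 : ℝ) ≤ 1 + τ := by linarith
    have hx : Real.sqrt ((1 + τ) / 2) ^ (2 * k + 1)
        = ((1 + τ) / 2) ^ k * Real.sqrt ((1 + τ) / 2) := by
      rw [pow_succ, pow_mul, Real.sq_sqrt (by linarith : (0:ℝ) ≤ (1 + τ) / 2)]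
    have hsq : Real.sqrt ((1 + τ) / 2) = Real.sqrt (τ + 1) / Real.sqrt 2 := by
      rw [show (1 + τ) / 2 = (τ + 1) / 2 by ring, Real.sqrt_div (by linarith)]
    have hexp : Real.exp (-τ * l) = Real.exp l * Real.exp (-(τ + 1) * l) := by
      rw [← Real.exp_add]; congr 1; ring
    rw [hx, hsq, hexp, show (1 + τ) / 2 = (τ + 1) / 2 by ring, div_pow]
    field_simp
  -- integrability of each summand
  have hIk : ∀ k : ℕ, IntegrableOn
      (fun τ : ℝ => (τ + 1) ^ k * Real.sqrt (τ + 1) * Real.exp (-(τ + 1) * l))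
      (Set.Ici (-1 : ℝ)) := fun k =>
    shift_integrableOn ((integrableOn_Ici_iff_integrableOn_Ioi enorm_ne_top).2 (base_integrable k hl))
  have hInt : IntegrableOn
      (fun τ : ℝ => ∑ k ∈ Finset.range (n + 1),
        cc n k * Real.exp l / (2 ^ k * Real.sqrt 2) *
          ((τ + 1) ^ k * Real.sqrt (τ + 1) * Real.exp (-(τ + 1) * l)))
      (Set.Ici (-1 : ℝ)) :=
    integrable_finset_sum _ fun k _ => ((hIk k).const_mul _)
  constructor
  · exact hInt.congr_fun (fun τ hτ => (hpt τ hτ).symm) measurableSet_Ici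
  · rw [setIntegral_congr_fun measurableSet_Ici hpt,
        integral_finset_sum _ fun k _ => ((hIk k).const_mul _)]
    have hval : ∀ k : ℕ,
        ∫ τ in Set.Ici (-1 : ℝ),
          cc n k * Real.exp l / (2 ^ k * Real.sqrt 2) *
            ((τ + 1) ^ k * Real.sqrt (τ + 1) * Real.exp (-(τ + 1) * l))
        = cc n k * Real.exp l / (2 ^ k * Real.sqrt 2) *
            ((1 / l) ^ ((k : ℝ) + 3 / 2) * Real.Gamma ((k : ℝ) + 3 / 2)) := by
      intro k
      rw [integral_const_mul, shift_integral
        (fun s => s ^ k * Real.sqrt s * Real.exp (-s * l)),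
        integral_Ici_eq_integral_Ioi, base_integral k hl]
    rw [Finset.sum_congr rfl fun k _ => hval k, Finset.mul_sum, Finset.mul_sum]
    refine Finset.sum_congr rfl fun k hk => ?_
    rw [Finset.mem_range] at hk
    obtain ⟨m, rfl⟩ : ∃ m, n = k + m := ⟨n - k, by omega⟩
    -- explicit values
    rw [cc_of_le rfl]
    have hG : Real.Gamma ((k : ℝ) + 3 / 2)
        = Real.sqrt π * ((2 * k + 2) * ((2 * k + 1) * Nat.factorial (2 * k)))
          / (4 * 4 ^ k * ((k + 1) * Nat.factorial k)) := by
      have h := Gamma_nat_half (k + 1)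
      rw [show (((k + 1 : ℕ)) : ℝ) + 1 / 2 = (k : ℝ) + 3 / 2 by push_cast; ring] at h
      rw [h, show 2 * (k + 1) = ((2 * k) + 1) + 1 by omega, Nat.factorial_succ,
          Nat.factorial_succ, Nat.factorial_succ]
      push_cast
      ring_nf
    have hr : (1 / l : ℝ) ^ ((k : ℝ) + 3 / 2) = 1 / (l ^ k * l * Real.sqrt l) := by
      rw [show ((k : ℝ) + 3 / 2) = ((k : ℕ) : ℝ) + (1 + 1 / 2) by push_cast; ring,
          Real.rpow_add (by positivity), Real.rpow_add (by positivity),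
          Real.rpow_natCast, Real.rpow_one, ← Real.sqrt_eq_rpow, div_pow, one_pow]
      rw [show (1:ℝ)/l = l⁻¹ from one_div l, Real.sqrt_inv]
      field_simp
    have hnu : ((k + m + 1 : ℕ) : ℝ) - 1 / 2 = (k : ℝ) + m + 1 / 2 := by push_cast; ring
    rw [hnu, show k + m + 1 - 1 = k + m by omega, show k + m + k = 2 * k + m by omega,
        show k + m - k = m by omega, hG, hr]
    have hsqpil : Real.sqrt (π / (2 * l)) = Real.sqrt π / (Real.sqrt 2 * Real.sqrt l) := by
      rw [Real.sqrt_div Real.pi_pos.le, Real.sqrt_mul (by norm_num : (0:ℝ) ≤ 2)]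
    rw [hsqpil, zpow_neg, zpow_natCast, mul_pow]
    have h2k1 : (Nat.factorial (2 * k + 1) : ℝ) = (2 * k + 1) * Nat.factorial (2 * k) := by
      rw [Nat.factorial_succ]; push_cast; ring
    rw [h2k1]
    have hf1 := fac_ne (2 * k + m)
    have hf2 := fac_ne m
    have hf3 := fac_ne (2 * k)
    have hf4 := fac_ne k
    have h2kne : ((2 : ℝ)) ^ k ≠ 0 := by positivity
    have hlk : (l : ℝ) ^ k ≠ 0 := by positivity
    have hneg : ((-1:ℝ)) ^ (k * 2) = 1 := by rw [mul_comm, pow_mul]; norm_num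
    field_simp
    ring_nf
    simp only [hneg, mul_one]
end

section
/- Let N ≥ 0 be an integer, u ∈ ℝ, and T₁, T₃, …, T_{2N+1} real numbers satisfying the string equation Σ_{k=0}^{N} ((2k+1)!!/k!)·T_{2k+1}·u^k = 0. For −1 ≤ s ≤ N−1 define M_s = Σ_{k=s+1}^{N} T_{2k+1} · (2k+1)!! / ( (2s+1)!!·(k−s−1)! ) · u^{k−s−1} (so that the string equation states M_{−1} = 0). Then for every 0 ≤ k ≤ N: T_{2k+1} = (1/(2k+1)) · Σ_{s=k}^{N} (−1)^{s−k} · M_{s−1} · u^{s−k} · (2s−1)!! / ( (2k−1)!!·(s−k)! ). -/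
open Finset

/-- The moment `M_{s−1}` of the times of the dispersionless KdV hierarchy
(indices shifted by one so that `kdvMoment N u T s = M_{s-1}`):
`M_{s−1} = Σ_{k=s}^{N} T_{2k+1}·(2k+1)!!/((2s−1)!!·(k−s)!)·u^{k−s}`.
Here `T k` denotes the time `T_{2k+1}`, `(2m+1)!!` is the double factorial
(with `(−1)!! = 1`, realized by the truncated subtraction `2*0−1 = 0` and
`0‼ = 1`). -/
noncomputable def kdvMoment (N : ℕ) (u : ℝ) (T : ℕ → ℝ) (s : ℕ) : ℝ :=
  ∑ k ∈ Finset.Icc s N,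
    T k * (Nat.doubleFactorial (2 * k + 1) : ℝ) /
        ((Nat.doubleFactorial (2 * s - 1) : ℝ) * (Nat.factorial (k - s) : ℝ)) *
      u ^ (k - s)

lemma alt_sum (m : ℕ) :
    ∑ t ∈ Finset.range (m + 1),
        (-1 : ℝ) ^ t / ((Nat.factorial t : ℝ) * (Nat.factorial (m - t) : ℝ))
      = if m = 0 then 1 else 0 := by
  have hchoose : ∀ t ∈ Finset.range (m + 1),
      (-1 : ℝ) ^ t / ((Nat.factorial t : ℝ) * (Nat.factorial (m - t) : ℝ))
        = (-1 : ℝ) ^ t * (m.choose t : ℝ) / (Nat.factorial m : ℝ) := by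
    intro t ht
    have htm : t ≤ m := Nat.lt_succ_iff.mp (Finset.mem_range.mp ht)
    have h := Nat.choose_mul_factorial_mul_factorial htm
    have h' : ((m.choose t : ℝ)) * (Nat.factorial t : ℝ) * (Nat.factorial (m - t) : ℝ)
        = (Nat.factorial m : ℝ) := by exact_mod_cast congrArg (Nat.cast (R := ℝ)) h
    have h1 : (Nat.factorial t : ℝ) ≠ 0 := Nat.cast_ne_zero.mpr (Nat.factorial_ne_zero t)
    have h2 : (Nat.factorial (m - t) : ℝ) ≠ 0 := Nat.cast_ne_zero.mpr (Nat.factorial_ne_zero _)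
    have h3 : (Nat.factorial m : ℝ) ≠ 0 := Nat.cast_ne_zero.mpr (Nat.factorial_ne_zero m)
    field_simp
    linear_combination (-1 : ℝ) * h'
  rw [Finset.sum_congr rfl hchoose, ← Finset.sum_div]
  have h := Int.alternating_sum_range_choose (n := m)
  have h' : ∑ t ∈ Finset.range (m + 1), (-1 : ℝ) ^ t * (m.choose t : ℝ)
      = if m = 0 then 1 else 0 := by exact_mod_cast congrArg (Int.cast (R := ℝ)) h
  rw [h']
  by_cases hm : m = 0 <;> simp [hm]

lemma df_succ (k : ℕ) :
    (Nat.doubleFactorial (2 * k + 1) : ℝ)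
      = (2 * (k : ℝ) + 1) * (Nat.doubleFactorial (2 * k - 1) : ℝ) := by
  cases k with
  | zero => simp [Nat.doubleFactorial]
  | succ n =>
      have h : 2 * (n + 1) + 1 = (2 * n + 1) + 2 := by omega
      have h2 : 2 * (n + 1) - 1 = 2 * n + 1 := by omega
      rw [h, h2, Nat.doubleFactorial]
      push_cast
      ring

/-- Inversion of the moment transform of the dispersionless KdV hierarchy: if
the times satisfy the string equation `Σ_{k=0}^{N} ((2k+1)!!/k!)·T_{2k+1}·u^k = 0`,
then for every `0 ≤ k ≤ N`,
`T_{2k+1} = (1/(2k+1))·Σ_{s=k}^{N} (−1)^{s−k}·M_{s−1}·u^{s−k}·(2s−1)!!/((2k−1)!!·(s−k)!)`. -/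
theorem kdv_times_from_moments (N : ℕ) (u : ℝ) (T : ℕ → ℝ)
    (hstring : ∑ k ∈ Finset.range (N + 1),
        ((Nat.doubleFactorial (2 * k + 1) : ℝ) / (Nat.factorial k : ℝ)) * T k * u ^ k = 0) :
    ∀ k ≤ N,
      T k = (1 / (2 * (k : ℝ) + 1)) *
        ∑ s ∈ Finset.Icc k N,
          (-1 : ℝ) ^ (s - k) * kdvMoment N u T s * u ^ (s - k) *
              (Nat.doubleFactorial (2 * s - 1) : ℝ) /
            ((Nat.doubleFactorial (2 * k - 1) : ℝ) * (Nat.factorial (s - k) : ℝ)) := by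
  intro k hk
  have h2k : (2 * (k : ℝ) + 1) ≠ 0 := by positivity
  have hdk : (Nat.doubleFactorial (2 * k - 1) : ℝ) ≠ 0 :=
    Nat.cast_ne_zero.mpr (Nat.doubleFactorial_pos _).ne'
  set G : ℕ → ℕ → ℝ := fun s j =>
    T j * (Nat.doubleFactorial (2 * j + 1) : ℝ) * u ^ (j - k) *
      ((-1 : ℝ) ^ (s - k) /
        ((Nat.doubleFactorial (2 * k - 1) : ℝ) * (Nat.factorial (s - k) : ℝ) *
          (Nat.factorial (j - s) : ℝ))) with hG
  have step1 : ∀ s ∈ Finset.Icc k N,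
      (-1 : ℝ) ^ (s - k) * kdvMoment N u T s * u ^ (s - k) *
          (Nat.doubleFactorial (2 * s - 1) : ℝ) /
        ((Nat.doubleFactorial (2 * k - 1) : ℝ) * (Nat.factorial (s - k) : ℝ))
      = ∑ j ∈ Finset.Icc s N, G s j := by
    intro s hs
    obtain ⟨hks, hsN⟩ := Finset.mem_Icc.mp hs
    rw [kdvMoment, Finset.mul_sum, Finset.sum_mul, Finset.sum_mul, Finset.sum_div]
    refine Finset.sum_congr rfl fun j hj => ?_
    obtain ⟨hsj, hjN⟩ := Finset.mem_Icc.mp hj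
    have hds : (Nat.doubleFactorial (2 * s - 1) : ℝ) ≠ 0 :=
      Nat.cast_ne_zero.mpr (Nat.doubleFactorial_pos _).ne'
    have hf1 : (Nat.factorial (j - s) : ℝ) ≠ 0 := Nat.cast_ne_zero.mpr (Nat.factorial_ne_zero _)
    have hf2 : (Nat.factorial (s - k) : ℝ) ≠ 0 := Nat.cast_ne_zero.mpr (Nat.factorial_ne_zero _)
    have he : j - k = (j - s) + (s - k) := by omega
    rw [hG]
    simp only
    rw [he, pow_add]
    field_simp
  rw [Finset.sum_congr rfl step1]
  have step2 : ∑ s ∈ Finset.Icc k N, ∑ j ∈ Finset.Icc s N, G s j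
      = ∑ j ∈ Finset.Icc k N, ∑ s ∈ Finset.Icc k j, G s j := by
    refine Finset.sum_comm' ?_
    intro s j
    simp only [Finset.mem_Icc]
    omega
  rw [step2]
  have step3 : ∀ j ∈ Finset.Icc k N,
      ∑ s ∈ Finset.Icc k j, G s j
        = (if j = k then
            T j * (Nat.doubleFactorial (2 * j + 1) : ℝ) * u ^ (j - k) /
              (Nat.doubleFactorial (2 * k - 1) : ℝ)
          else 0) := by
    intro j hj
    obtain ⟨hkj, hjN⟩ := Finset.mem_Icc.mp hj
    have hre : ∑ s ∈ Finset.Icc k j, G s j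
        = ∑ t ∈ Finset.range (j - k + 1), G (k + t) j := by
      rw [← Finset.Ico_add_one_right_eq_Icc, Finset.sum_Ico_eq_sum_range]
      have : j + 1 - k = j - k + 1 := by omega
      rw [this]
    rw [hre]
    have hterm : ∀ t ∈ Finset.range (j - k + 1),
        G (k + t) j
          = (T j * (Nat.doubleFactorial (2 * j + 1) : ℝ) * u ^ (j - k) /
              (Nat.doubleFactorial (2 * k - 1) : ℝ)) *
            ((-1 : ℝ) ^ t /
              ((Nat.factorial t : ℝ) * (Nat.factorial ((j - k) - t) : ℝ))) := by
      intro t ht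
      have ht' : t ≤ j - k := Nat.lt_succ_iff.mp (Finset.mem_range.mp ht)
      have e1 : k + t - k = t := by omega
      have e2 : j - (k + t) = (j - k) - t := by omega
      rw [hG]
      simp only [e1, e2]
      ring
    rw [Finset.sum_congr rfl hterm, ← Finset.mul_sum, alt_sum (j - k)]
    by_cases hjk : j = k
    · simp [hjk]
    · have : j - k ≠ 0 := by omega
      simp [hjk, this]
  rw [Finset.sum_congr rfl step3, Finset.sum_ite_eq' (Finset.Icc k N) k]
  simp only [Finset.mem_Icc, le_refl, hk, and_self, if_true, Nat.sub_self, pow_zero, mul_one]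
  rw [df_succ k]
  field_simp
end

section
/- Let T₁, c, x, y be real numbers and T₅ ≠ 0. Set T̄₁ = T₁, T̄₅ = −(2/3)·T₅, x̄ = y/(5T₅) and ȳ = (10/3)·T₅·x. Then ȳ² − 25·T̄₅²·x̄³ − 10·T̄₁·T̄₅·x̄ + (20/3)·T₅·c = −(4/(45·T₅)) · ( y³ − 15·T₁T₅·y − 125·T₅³·x² − 75·T₅²·c ). In particular, (x, y) satisfies the (3,2)-model curve y³ − 15T₁T₅y − 125T₅³x² − 75T₅²c = 0 if and only if (x̄, ȳ) satisfies the (2,3)-model curve ȳ² − 25T̄₅²x̄³ − 10T̄₁T̄₅x̄ − 10T̄₅c = 0. -/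
/-- The p–q duality isomorphism between the (3,2)- and (2,3)-model spectral
curves at the critical point, as an explicit linear change of coordinates:
with `T̄₁ = T₁`, `T̄₅ = −(2/3)T₅`, `x̄ = y/(5T₅)` and `ȳ = (10/3)T₅x`,
`ȳ² − 25T̄₅²x̄³ − 10T̄₁T̄₅x̄ + (20/3)T₅c
  = −(4/(45T₅))·(y³ − 15T₁T₅y − 125T₅³x² − 75T₅²c)`;
in particular `(x, y)` lies on the (3,2) curve
`y³ − 15T₁T₅y − 125T₅³x² − 75T₅²c = 0` iff `(x̄, ȳ)` lies on the (2,3) curve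
`ȳ² − 25T̄₅²x̄³ − 10T̄₁T̄₅x̄ − 10T̄₅c = 0`. -/
theorem pq_duality_32_23_curves (T₁ c x y T₅ : ℝ) (hT₅ : T₅ ≠ 0) :
    (((10 / 3) * T₅ * x) ^ 2 - 25 * (-(2 / 3) * T₅) ^ 2 * (y / (5 * T₅)) ^ 3 -
          10 * T₁ * (-(2 / 3) * T₅) * (y / (5 * T₅)) + (20 / 3) * T₅ * c =
        -(4 / (45 * T₅)) *
          (y ^ 3 - 15 * T₁ * T₅ * y - 125 * T₅ ^ 3 * x ^ 2 - 75 * T₅ ^ 2 * c)) ∧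
    (y ^ 3 - 15 * T₁ * T₅ * y - 125 * T₅ ^ 3 * x ^ 2 - 75 * T₅ ^ 2 * c = 0 ↔
      ((10 / 3) * T₅ * x) ^ 2 - 25 * (-(2 / 3) * T₅) ^ 2 * (y / (5 * T₅)) ^ 3 -
          10 * T₁ * (-(2 / 3) * T₅) * (y / (5 * T₅)) - 10 * (-(2 / 3) * T₅) * c = 0) := by
  have h : (((10 / 3) * T₅ * x) ^ 2 - 25 * (-(2 / 3) * T₅) ^ 2 * (y / (5 * T₅)) ^ 3 -
          10 * T₁ * (-(2 / 3) * T₅) * (y / (5 * T₅)) + (20 / 3) * T₅ * c =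
        -(4 / (45 * T₅)) *
          (y ^ 3 - 15 * T₁ * T₅ * y - 125 * T₅ ^ 3 * x ^ 2 - 75 * T₅ ^ 2 * c)) := by
    field_simp
    ring
  refine ⟨h, ?_⟩
  have h2 : ((10 / 3) * T₅ * x) ^ 2 - 25 * (-(2 / 3) * T₅) ^ 2 * (y / (5 * T₅)) ^ 3 -
          10 * T₁ * (-(2 / 3) * T₅) * (y / (5 * T₅)) - 10 * (-(2 / 3) * T₅) * c =
      -(4 / (45 * T₅)) *
          (y ^ 3 - 15 * T₁ * T₅ * y - 125 * T₅ ^ 3 * x ^ 2 - 75 * T₅ ^ 2 * c) := by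
    field_simp
    ring
  rw [h2]
  constructor
  · intro h0; rw [h0]; ring
  · intro h0
    have : -(4 / (45 * T₅)) ≠ 0 := by
      simp [hT₅]
    exact (mul_eq_zero.mp h0).resolve_left this
end
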